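/- If a finite abelian group G admits factorizations G = H ⊕ K = A ⊕ B, where H, K are subgroups of G with coprime orders and A, B are subsets with |A| = |H| and |B| = |K|, then G = H ⊕ B and G = A ⊕ K. -/

import Mathlib

open Pointwise

set_option maxHeartbeats 1000000 in
open Finset AddMonoidAlgebra in
private lemma prime_step {G : Type*} [AddCommGroup G] [Fintype G] [DecidableEq G]
    (p : ℕ) (hp : p.Prime) (S T : Finset G) (hS : ¬ p ∣ S.card)
    (hfac : ∀ g : G, ∃! st : G × G, st.1 ∈ S ∧ st.2 ∈ T ∧ st.1 + st.2 = g) :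
    ∀ g : G, ∃! st : G × G, st.1 ∈ S ∧ st.2 ∈ T ∧ p • st.1 + st.2 = g := by
  haveI : Fact p.Prime := ⟨hp⟩
  classical
  haveI : CharP (AddMonoidAlgebra (ZMod p) G) p :=
    charP_of_injective_ringHom (R := ZMod p)
      (f := AddMonoidAlgebra.singleZeroRingHom (R := ZMod p) (M := G))
      (AddMonoidAlgebra.single_right_injective (m := (0 : G))) p
  set a : AddMonoidAlgebra (ZMod p) G := ∑ x ∈ S, AddMonoidAlgebra.single x (1 : ZMod p) with ha
  set b : AddMonoidAlgebra (ZMod p) G := ∑ y ∈ T, AddMonoidAlgebra.single y (1 : ZMod p) with hb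
  set u : AddMonoidAlgebra (ZMod p) G := ∑ g : G, AddMonoidAlgebra.single g (1 : ZMod p) with hu
  have hab : a * b = u := by
    rw [ha, hb, hu, Finset.sum_mul_sum]
    simp_rw [AddMonoidAlgebra.single_mul_single, one_mul]
    rw [← Finset.sum_product']
    apply Finset.sum_bij (i := fun st _ => st.1 + st.2)
    · intro st _; exact Finset.mem_univ _
    · intro st hst st' hst' heq
      rw [Finset.mem_product] at hst hst'
      obtain ⟨w, hw, huniq⟩ := hfac (st.1 + st.2)
      have h1 := huniq st ⟨hst.1, hst.2, rfl⟩
      have h2 := huniq st' ⟨hst'.1, hst'.2, heq.symm⟩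
      rw [h1, h2]
    · intro g _
      obtain ⟨st, ⟨h1, h2, h3⟩, -⟩ := hfac g
      exact ⟨st, Finset.mem_product.mpr ⟨h1, h2⟩, h3⟩
    · intro st _; rfl
  have hcard : (S ×ˢ T).card = Fintype.card G := by
    rw [← Finset.card_univ]
    apply Finset.card_bij (i := fun st _ => st.1 + st.2)
    · intro st _; exact Finset.mem_univ _
    · intro st hst st' hst' heq
      rw [Finset.mem_product] at hst hst'
      obtain ⟨w, hw, huniq⟩ := hfac (st.1 + st.2)
      have h1 := huniq st ⟨hst.1, hst.2, rfl⟩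
      have h2 := huniq st' ⟨hst'.1, hst'.2, heq.symm⟩
      rw [h1, h2]
    · intro g _
      obtain ⟨st, ⟨h1, h2, h3⟩, -⟩ := hfac g
      exact ⟨st, Finset.mem_product.mpr ⟨h1, h2⟩, h3⟩
  have hap : a ^ p = ∑ x ∈ S, AddMonoidAlgebra.single (p • x) (1 : ZMod p) := by
    rw [ha, sum_pow_char]
    simp_rw [AddMonoidAlgebra.single_pow, one_pow]
  set ε : AddMonoidAlgebra (ZMod p) G →+* ZMod p :=
    AddMonoidAlgebra.liftNCRingHom (RingHom.id (ZMod p)) 1 (fun _ _ => Commute.all _ _) with hε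
  have hεs : ∀ (x : G) (r : ZMod p), ε (AddMonoidAlgebra.single x r) = r := by
    intro x r
    simp [hε, AddMonoidAlgebra.liftNCRingHom, AddMonoidAlgebra.liftNC_single]
  have hmulu : ∀ s : AddMonoidAlgebra (ZMod p) G, s * u = ε s • u := by
    intro s
    induction s using AddMonoidAlgebra.induction_linear with
    | zero => simp
    | add f g hf hg => rw [add_mul, hf, hg, map_add, add_smul]
    | single x r =>
      rw [hεs, hu, Finset.mul_sum, Finset.smul_sum]
      simp_rw [AddMonoidAlgebra.single_mul_single, mul_one, AddMonoidAlgebra.smul_single', mul_one]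
      exact Fintype.sum_equiv (Equiv.addLeft x) _ _ (fun g => rfl)
  have hεa : ε a = (S.card : ZMod p) := by
    rw [ha, map_sum]
    simp [hεs]
  have hSne : (S.card : ZMod p) ≠ 0 := fun h => hS ((ZMod.natCast_eq_zero_iff _ _).mp h)
  have key : a ^ p * b = u := by
    have h1 : a ^ p * b = a ^ (p - 1) * (a * b) := by
      rw [← mul_assoc, ← pow_succ, Nat.sub_add_cancel hp.one_lt.le]
    rw [h1, hab, hmulu, map_pow, hεa, ZMod.pow_card_sub_one_eq_one hSne, one_smul]
  have key2 : (∑ st ∈ S ×ˢ T, AddMonoidAlgebra.single (p • st.1 + st.2) (1 : ZMod p)) = u := by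
    rw [← key, hap, hb, Finset.sum_mul_sum]
    simp_rw [AddMonoidAlgebra.single_mul_single, one_mul]
    rw [← Finset.sum_product']
  have hNg : ∀ g : G, ((((S ×ˢ T).filter (fun st => p • st.1 + st.2 = g)).card : ℕ) : ZMod p) = 1 := by
    intro g
    have h4 := congrArg (fun s : AddMonoidAlgebra (ZMod p) G => s.coeff g) key2
    beta_reduce at h4
    rw [AddMonoidAlgebra.coeff_sum, Finset.sum_apply'] at h4
    simp_rw [AddMonoidAlgebra.coeff_single, Finsupp.single_apply] at h4
    rw [Finset.sum_boole] at h4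
    have hug : u.coeff g = 1 := by
      rw [hu, AddMonoidAlgebra.coeff_sum, Finset.sum_apply']
      simp_rw [AddMonoidAlgebra.coeff_single, Finsupp.single_apply]
      rw [Finset.sum_ite_eq' Finset.univ g (fun _ => (1 : ZMod p))]
      simp
    rw [hug] at h4
    exact h4
  have hsum : ∑ g : G, ((S ×ˢ T).filter (fun st => p • st.1 + st.2 = g)).card = Fintype.card G := by
    rw [← hcard]
    exact (Finset.card_eq_sum_card_fiberwise (s := S ×ˢ T) (t := Finset.univ)
      (f := fun st : G × G => p • st.1 + st.2) (fun st _ => Finset.mem_univ _)).symm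
  have hpos : ∀ g : G, 1 ≤ ((S ×ˢ T).filter (fun st => p • st.1 + st.2 = g)).card := by
    intro g
    rcases Nat.eq_zero_or_pos (((S ×ˢ T).filter (fun st => p • st.1 + st.2 = g)).card) with h | h
    · exfalso
      have := hNg g
      rw [h] at this
      simp at this
    · exact h
  have hone : ∀ g : G, ((S ×ˢ T).filter (fun st => p • st.1 + st.2 = g)).card = 1 := by
    have hs : ∑ g : G, (1 : ℕ) = ∑ g : G, ((S ×ˢ T).filter (fun st => p • st.1 + st.2 = g)).card := by
      rw [hsum, Finset.sum_const, Finset.card_univ, smul_eq_mul, mul_one]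
    have := (Finset.sum_eq_sum_iff_of_le (fun g _ => hpos g)).mp hs
    intro g
    exact ((this g (Finset.mem_univ g))).symm
  intro g
  obtain ⟨st0, hst0⟩ := Finset.card_eq_one.mp (hone g)
  have hmem : st0 ∈ (S ×ˢ T).filter (fun st => p • st.1 + st.2 = g) := by
    rw [hst0]; exact Finset.mem_singleton_self st0
  rw [Finset.mem_filter, Finset.mem_product] at hmem
  refine ⟨st0, ⟨hmem.1.1, hmem.1.2, hmem.2⟩, ?_⟩
  rintro st ⟨h1, h2, h3⟩
  have : st ∈ (S ×ˢ T).filter (fun st => p • st.1 + st.2 = g) :=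
    Finset.mem_filter.mpr ⟨Finset.mem_product.mpr ⟨h1, h2⟩, h3⟩
  rw [hst0, Finset.mem_singleton] at this
  exact this

private lemma iter_step {G : Type*} [AddCommGroup G] [Fintype G] [DecidableEq G] :
    ∀ r : ℕ, 0 < r → ∀ S T : Finset G, Nat.Coprime r S.card →
      (∀ g : G, ∃! st : G × G, st.1 ∈ S ∧ st.2 ∈ T ∧ st.1 + st.2 = g) →
      (S.image (r • ·)).card = S.card ∧
        ∀ g : G, ∃! st : G × G, st.1 ∈ S.image (r • ·) ∧ st.2 ∈ T ∧ st.1 + st.2 = g := by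
  intro r
  induction r using Nat.strong_induction_on with
  | _ r ih =>
    intro hr S T hcop hfac
    rcases eq_or_ne r 1 with rfl | hne
    · constructor
      · congr 1
        ext x
        simp [one_nsmul]
      · intro g
        obtain ⟨st, ⟨h1, h2, h3⟩, hu⟩ := hfac g
        refine ⟨st, ⟨Finset.mem_image.mpr ⟨st.1, h1, one_nsmul st.1⟩, h2, h3⟩, ?_⟩
        rintro y ⟨hy1, hy2, hy3⟩
        obtain ⟨x, hx, hxy⟩ := Finset.mem_image.mp hy1
        rw [one_nsmul] at hxy
        exact hu y ⟨hxy ▸ hx, hy2, hy3⟩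
    · obtain ⟨q, hq, s, rfl⟩ := Nat.exists_prime_and_dvd hne
      have hq1 : ¬ q ∣ S.card := by
        intro h
        have hd : q ∣ 1 := hcop ▸ Nat.dvd_gcd ⟨s, rfl⟩ h
        exact hq.ne_one (Nat.dvd_one.mp hd)
      have hspos : 0 < s := Nat.pos_of_mul_pos_left (by rwa [mul_comm q s] at hr)
      have hps := prime_step q hq S T hq1 hfac
      -- T nonempty
      obtain ⟨st0, ⟨-, ht0, -⟩, -⟩ := hfac 0
      -- q-smul injective on S
      have hinj : Set.InjOn (fun x => q • x) (S : Set G) := by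
        intro x hx x' hx' hxx
        simp only at hxx
        obtain ⟨w, hw, huniq⟩ := hps (q • x + st0.2)
        have e1 := huniq (x, st0.2) ⟨hx, ht0, rfl⟩
        have e2 := huniq (x', st0.2) ⟨hx', ht0, by rw [← hxx]⟩
        exact congrArg Prod.fst (e1.trans e2.symm)
      have hcard' : (S.image (q • ·)).card = S.card :=
        Finset.card_image_of_injOn hinj
      have hfac' : ∀ g : G, ∃! st : G × G,
          st.1 ∈ S.image (q • ·) ∧ st.2 ∈ T ∧ st.1 + st.2 = g := by
        intro g
        obtain ⟨w, ⟨hw1, hw2, hw3⟩, huniq⟩ := hps g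
        refine ⟨(q • w.1, w.2), ⟨Finset.mem_image.mpr ⟨w.1, hw1, rfl⟩, hw2, hw3⟩, ?_⟩
        rintro ⟨z, y⟩ ⟨hz, hy, hzy⟩
        obtain ⟨x, hx, rfl⟩ := Finset.mem_image.mp hz
        have := huniq (x, y) ⟨hx, hy, hzy⟩
        rw [← this]
      have hslt : s < q * s := (Nat.lt_mul_iff_one_lt_left hspos).mpr hq.one_lt
      have hcop' : Nat.Coprime s ((S.image (q • ·)).card) := by
        rw [hcard']
        exact Nat.Coprime.coprime_dvd_left ⟨q, mul_comm q s⟩ hcop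
      obtain ⟨hc2, hf2⟩ := ih s hslt hspos (S.image (q • ·)) T hcop' hfac'
      have himg : (S.image (q • ·)).image (s • ·) = S.image ((q * s) • ·) := by
        rw [Finset.image_image]
        apply Finset.image_congr
        intro x _
        exact (mul_nsmul x q s).symm
      constructor
      · rw [← himg, hc2, hcard']
      · rw [← himg]
        exact hf2

private lemma swap_fac {G : Type*} [AddCommGroup G] {P Q : G → Prop}
    (h : ∀ g : G, ∃! st : G × G, P st.1 ∧ Q st.2 ∧ st.1 + st.2 = g) :
    ∀ g : G, ∃! st : G × G, Q st.1 ∧ P st.2 ∧ st.1 + st.2 = g := by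
  intro g
  obtain ⟨⟨x, y⟩, ⟨hx, hy, hxy⟩, hu⟩ := h g
  refine ⟨(y, x), ⟨hy, hx, by rw [add_comm]; exact hxy⟩, ?_⟩
  rintro ⟨z, w⟩ ⟨hz, hw, hzw⟩
  have := hu (w, z) ⟨hw, hz, by rw [add_comm]; exact hzw⟩
  rw [Prod.ext_iff] at this ⊢
  exact ⟨this.2, this.1⟩

theorem stmt_4 {G : Type*} [AddCommGroup G] [Fintype G]
    (H K : AddSubgroup G) (A B : Set G)
    (hcop : Nat.Coprime (Nat.card H) (Nat.card K))
    (hAcard : A.ncard = Nat.card H) (hBcard : B.ncard = Nat.card K)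
    (hHK : ∀ g : G, ∃! hk : G × G, hk.1 ∈ H ∧ hk.2 ∈ K ∧ hk.1 + hk.2 = g)
    (hAB : ∀ g : G, ∃! ab : G × G, ab.1 ∈ A ∧ ab.2 ∈ B ∧ ab.1 + ab.2 = g) :
    (∀ g : G, ∃! hb : G × G, hb.1 ∈ H ∧ hb.2 ∈ B ∧ hb.1 + hb.2 = g) ∧
      (∀ g : G, ∃! ak : G × G, ak.1 ∈ A ∧ ak.2 ∈ K ∧ ak.1 + ak.2 = g) := by
  classical
  have hm0 : 0 < Nat.card H := Nat.card_pos
  have hn0 : 0 < Nat.card K := Nat.card_pos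
  have hAfin : A.Finite := A.toFinite
  have hBfin : B.Finite := B.toFinite
  have hFA : hAfin.toFinset.card = Nat.card H := by
    rw [← hAcard, Set.ncard_eq_toFinset_card A hAfin]
  have hFB : hBfin.toFinset.card = Nat.card K := by
    rw [← hBcard, Set.ncard_eq_toFinset_card B hBfin]
  have hfacAB : ∀ g : G, ∃! st : G × G,
      st.1 ∈ hAfin.toFinset ∧ st.2 ∈ hBfin.toFinset ∧ st.1 + st.2 = g := by
    intro g
    obtain ⟨st, ⟨h1, h2, h3⟩, hu⟩ := hAB g
    exact ⟨st, ⟨hAfin.mem_toFinset.mpr h1, hBfin.mem_toFinset.mpr h2, h3⟩,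
      fun y hy => hu y ⟨hAfin.mem_toFinset.mp hy.1, hBfin.mem_toFinset.mp hy.2.1, hy.2.2⟩⟩
  -- n • g ∈ H and m • g ∈ K
  have hkill : ∀ (L : AddSubgroup G) (x : G), x ∈ L → Nat.card L • x = 0 := by
    intro L x hx
    have h1 : Nat.card L • (⟨x, hx⟩ : L) = 0 := card_nsmul_eq_zero'
    have h2 := congrArg (Subtype.val) h1
    rw [AddSubmonoidClass.coe_nsmul] at h2
    exact h2
  have hnH : ∀ g : G, Nat.card K • g ∈ H := by
    intro g
    obtain ⟨⟨h, k⟩, ⟨hh, hk, hhk⟩, -⟩ := hHK g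
    rw [← hhk, smul_add, hkill K k hk, add_zero]
    exact AddSubgroup.nsmul_mem H hh _
  have hmK : ∀ g : G, Nat.card H • g ∈ K := by
    intro g
    obtain ⟨⟨h, k⟩, ⟨hh, hk, hhk⟩, -⟩ := hHK g
    rw [← hhk, smul_add, hkill H h hh, zero_add]
    exact AddSubgroup.nsmul_mem K hk _
  constructor
  · obtain ⟨hcard', hfac'⟩ := iter_step (Nat.card K) hn0 hAfin.toFinset hBfin.toFinset
      (by rw [hFA]; exact hcop.symm) hfacAB
    have hHfin : (H : Set G).Finite := (H : Set G).toFinite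
    have hFHcard : hHfin.toFinset.card = Nat.card H := by
      rw [← Set.ncard_eq_toFinset_card _ hHfin, ← Nat.card_coe_set_eq, SetLike.coe_sort_coe]
    have himg : hAfin.toFinset.image ((Nat.card K) • ·) = hHfin.toFinset := by
      apply Finset.eq_of_subset_of_card_le
      · intro x hx
        obtain ⟨a, _, rfl⟩ := Finset.mem_image.mp hx
        exact hHfin.mem_toFinset.mpr (hnH a)
      · rw [hFHcard, hcard', hFA]
    intro g
    obtain ⟨st, ⟨h1, h2, h3⟩, hu⟩ := hfac' g
    refine ⟨st, ⟨?_, hBfin.mem_toFinset.mp h2, h3⟩, ?_⟩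
    · exact hHfin.mem_toFinset.mp (himg ▸ h1)
    · rintro y ⟨g1, g2, g3⟩
      exact hu y ⟨himg ▸ hHfin.mem_toFinset.mpr g1, hBfin.mem_toFinset.mpr g2, g3⟩
  · have hfacBA := swap_fac hfacAB
    obtain ⟨hcard', hfac'⟩ := iter_step (Nat.card H) hm0 hBfin.toFinset hAfin.toFinset
      (by rw [hFB]; exact hcop) hfacBA
    have hKfin : (K : Set G).Finite := (K : Set G).toFinite
    have hFKcard : hKfin.toFinset.card = Nat.card K := by
      rw [← Set.ncard_eq_toFinset_card _ hKfin, ← Nat.card_coe_set_eq, SetLike.coe_sort_coe]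
    have himg : hBfin.toFinset.image ((Nat.card H) • ·) = hKfin.toFinset := by
      apply Finset.eq_of_subset_of_card_le
      · intro x hx
        obtain ⟨b, _, rfl⟩ := Finset.mem_image.mp hx
        exact hKfin.mem_toFinset.mpr (hmK b)
      · rw [hFKcard, hcard', hFB]
    have hfac'' := swap_fac hfac'
    intro g
    obtain ⟨st, ⟨h1, h2, h3⟩, hu⟩ := hfac'' g
    refine ⟨st, ⟨hAfin.mem_toFinset.mp h1, ?_, h3⟩, ?_⟩
    · exact hKfin.mem_toFinset.mp (himg ▸ h2)
    · rintro y ⟨g1, g2, g3⟩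
      exact hu y ⟨hAfin.mem_toFinset.mpr g1, himg ▸ hKfin.mem_toFinset.mpr g2, g3⟩
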